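/- Every simple polygon has a safe radius: for every simple polygon P with vertices p_1, …, p_n there exists δ > 0 such that for every simple polygon Q with vertices q_1, …, q_n satisfying |p_i − q_i| < δ for all i, every triple of vertices (q_i, q_j, q_k) that is critical in Q is such that the corresponding triple (p_i, p_j, p_k) is critical in P. -/

import Mathlib

open Set

noncomputable section

/-- The Euclidean plane. -/
abbrev Plane : Type := EuclideanSpace ℝ (Fin 2)

/-- The `i`-th edge of the polygon with vertices `P 0, …, P (n-1)`:
the closed segment from `P i` to `P (i+1)` (indices mod `n`). -/
def polyEdge {n : ℕ} [NeZero n] (P : Fin n → Plane) (i : Fin n) : Set Plane :=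
  segment ℝ (P i) (P (i + 1))

/-- The boundary of the polygon: the union of its edges. -/
def polyBoundary {n : ℕ} [NeZero n] (P : Fin n → Plane) : Set Plane :=
  ⋃ i, polyEdge P i

/-- A simple polygon on `n ≥ 3` vertices: vertices are pairwise distinct and any
two distinct edges intersect only in common endpoints. -/
def IsSimplePolygon (n : ℕ) [NeZero n] (P : Fin n → Plane) : Prop :=
  3 ≤ n ∧ Function.Injective P ∧
    ∀ i j : Fin n, i ≠ j →
      polyEdge P i ∩ polyEdge P j ⊆
        (({P i, P (i + 1)} : Set Plane) ∩ ({P j, P (j + 1)} : Set Plane))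

/-- The interior of the polygon: the union of the bounded connected components of
the complement of the boundary. -/
def polyInterior {n : ℕ} [NeZero n] (P : Fin n → Plane) : Set Plane :=
  {x | x ∉ polyBoundary P ∧
    Bornology.IsBounded (connectedComponentIn (polyBoundary P)ᶜ x)}

/-- The exterior of the polygon: the unbounded connected component of
the complement of the boundary. -/
def polyExterior {n : ℕ} [NeZero n] (P : Fin n → Plane) : Set Plane :=
  {x | x ∉ polyBoundary P ∧
    ¬ Bornology.IsBounded (connectedComponentIn (polyBoundary P)ᶜ x)}

/-- Vertices `i` and `j` are internally visible: the open segment joining them is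
contained in the interior of the polygon. -/
def Visible {n : ℕ} [NeZero n] (P : Fin n → Plane) (i j : Fin n) : Prop :=
  openSegment ℝ (P i) (P j) ⊆ polyInterior P

/-- Vertex indices `i` and `j` are adjacent: `j ≡ i ± 1 (mod n)`. -/
def AdjacentIdx (n : ℕ) [NeZero n] (i j : Fin n) : Prop :=
  j = i + 1 ∨ i = j + 1

/-- A `k`-tuple of (distinct) vertices is critical if some straight segment contains
all of them and contains no point of the exterior of the polygon. -/
def CriticalTuple {n : ℕ} [NeZero n] (P : Fin n → Plane) {k : ℕ}
    (q : Fin k → Fin n) : Prop :=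
  Function.Injective (fun m => P (q m)) ∧
    ∃ u v : Plane, (∀ m, P (q m) ∈ segment ℝ u v) ∧
      segment ℝ u v ∩ polyExterior P = ∅

/-- A polygon is critical if it has a critical `k`-tuple for some `k ≥ 3`. -/
def IsCriticalPolygon {n : ℕ} [NeZero n] (P : Fin n → Plane) : Prop :=
  ∃ k : ℕ, 3 ≤ k ∧ ∃ q : Fin k → Fin n, CriticalTuple P q

/-- A polygon is convex if the closure of its interior is a convex set. -/
def IsConvexPolygon {n : ℕ} [NeZero n] (P : Fin n → Plane) : Prop :=
  Convex ℝ (closure (polyInterior P))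

/-- A transformation of a polygon on the time interval `[a, d]`: each vertex moves
along a continuous orbit, and at each time the points form a simple polygon. -/
def IsTransformation (n : ℕ) [NeZero n] (a d : ℝ) (F : ℝ → Fin n → Plane) : Prop :=
  a ≤ d ∧ (∀ i : Fin n, ContinuousOn (fun t => F t i) (Icc a d)) ∧
    ∀ t ∈ Icc a d, IsSimplePolygon n (F t)

/-- A transformation on `[a, d]` is visibility-preserving if visible pairs stay
visible as time increases. -/
def VisibilityPreserving (n : ℕ) [NeZero n] (a d : ℝ) (F : ℝ → Fin n → Plane) : Prop :=
  ∀ i j : Fin n, ∀ s t : ℝ, a ≤ s → s ≤ t → t ≤ d →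
    Visible (F s) i j → Visible (F t) i j

/-- A transformation on `[a, d]` is a single-vertex move if at most one orbit is
nonconstant. -/
def IsSingleVertexMoveOn (n : ℕ) [NeZero n] (a d : ℝ) (F : ℝ → Fin n → Plane) : Prop :=
  ∃ i : Fin n, ∀ j : Fin n, j ≠ i → ∀ t ∈ Icc a d, F t j = F a j

/-- `δ > 0` is a safe radius for `P` if every simple polygon `Q` whose vertices are
within distance `δ` of those of `P` has critical triples only at triples that are
already critical in `P`. -/
def SafeRadius {n : ℕ} [NeZero n] (P : Fin n → Plane) (δ : ℝ) : Prop :=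
  0 < δ ∧ ∀ Q : Fin n → Plane, IsSimplePolygon n Q →
    (∀ i : Fin n, dist (P i) (Q i) < δ) →
    ∀ q : Fin 3 → Fin n, CriticalTuple Q q → CriticalTuple P q


section SafeRadiusProof

open Metric Bornology

/-! ### Auxiliary lemmas for `statement3` -/

noncomputable def colDet (a b c : Plane) : ℝ :=
  (b 0 - a 0) * (c 1 - a 1) - (b 1 - a 1) * (c 0 - a 0)

lemma Plane.ext2 {a b : Plane} (h0 : a 0 = b 0) (h1 : a 1 = b 1) : a = b := by
  ext i
  fin_cases i
  · exact h0
  · exact h1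

lemma collinear_segment' (u v : Plane) : Collinear ℝ (segment ℝ u v) := by
  apply (collinear_iff_of_mem (left_mem_segment ℝ u v)).2
  refine ⟨v - u, fun p hp => ?_⟩
  rw [segment_eq_image'] at hp
  obtain ⟨t, _, rfl⟩ := hp
  exact ⟨t, by simp [vadd_eq_add]; abel⟩

lemma colDet_eq_zero_of_collinear {a b c : Plane}
    (h : Collinear ℝ ({a, b, c} : Set Plane)) : colDet a b c = 0 := by
  rw [collinear_iff_of_mem (show a ∈ ({a,b,c} : Set Plane) by simp)] at h
  obtain ⟨v, hv⟩ := h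
  obtain ⟨rb, hb⟩ := hv b (by simp)
  obtain ⟨rc, hc⟩ := hv c (by simp)
  rw [vadd_eq_add] at hb hc
  have hb0 : b 0 - a 0 = rb * v 0 := by rw [hb]; simp [PiLp.add_apply, PiLp.smul_apply]
  have hb1 : b 1 - a 1 = rb * v 1 := by rw [hb]; simp [PiLp.add_apply, PiLp.smul_apply]
  have hc0 : c 0 - a 0 = rc * v 0 := by rw [hc]; simp [PiLp.add_apply, PiLp.smul_apply]
  have hc1 : c 1 - a 1 = rc * v 1 := by rw [hc]; simp [PiLp.add_apply, PiLp.smul_apply]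
  rw [colDet, hb0, hb1, hc0, hc1]; ring

lemma collinear_of_colDet_eq_zero {a b c : Plane} (h : colDet a b c = 0) :
    Collinear ℝ ({a, b, c} : Set Plane) := by
  have expand : ∀ (r : ℝ) (i : Fin 2), (r • (b - a) + a) i = r * (b i - a i) + a i := by
    intro r i; simp [PiLp.add_apply, PiLp.smul_apply, PiLp.sub_apply]
  by_cases hba : b = a
  · subst hba
    refine (collinear_pair ℝ b c).subset ?_
    intro z hz; rcases hz with rfl | rfl | rfl <;> simp
  · rw [collinear_iff_of_mem (show a ∈ ({a,b,c} : Set Plane) by simp)]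
    refine ⟨b - a, fun p hp => ?_⟩
    have key : ∃ r : ℝ, c = r • (b - a) + a := by
      rw [colDet] at h
      by_cases h0 : b 0 - a 0 ≠ 0
      · refine ⟨(c 0 - a 0) / (b 0 - a 0), Plane.ext2 ?_ ?_⟩ <;> rw [expand]
        · field_simp; ring
        · field_simp; nlinarith [h]
      · push_neg at h0
        rw [h0, zero_mul, zero_sub, neg_eq_zero, mul_eq_zero] at h
        have h1 : b 1 - a 1 ≠ 0 := by
          intro h1
          exact hba (Plane.ext2 (by linarith) (by linarith))
        have hc0 : c 0 = a 0 := by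
          rcases h with h | h
          · exact absurd h h1
          · linarith
        refine ⟨(c 1 - a 1) / (b 1 - a 1), Plane.ext2 ?_ ?_⟩ <;> rw [expand]
        · rw [h0, hc0]; ring
        · field_simp; ring
    obtain ⟨r, hr⟩ := key
    rcases hp with rfl | rfl | rfl
    · exact ⟨0, by simp [vadd_eq_add]⟩
    · exact ⟨1, by simp [vadd_eq_add]⟩
    · exact ⟨r, by rw [vadd_eq_add, ← hr]⟩

lemma noncollinear_stable {a b c : Plane} (h : ¬ Collinear ℝ ({a, b, c} : Set Plane)) :
    ∃ δ : ℝ, 0 < δ ∧ ∀ a' b' c' : Plane, dist a a' < δ → dist b b' < δ → dist c c' < δ →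
      ¬ Collinear ℝ ({a', b', c'} : Set Plane) := by
  have hcont : Continuous fun p : Plane × Plane × Plane => colDet p.1 p.2.1 p.2.2 := by
    unfold colDet; fun_prop
  have h0 : colDet a b c ≠ 0 := fun h0 => h (collinear_of_colDet_eq_zero h0)
  have hev : ∀ᶠ p in nhds (a, b, c),
      colDet p.1 p.2.1 p.2.2 ≠ 0 := hcont.continuousAt.eventually_ne h0
  rw [Metric.eventually_nhds_iff] at hev
  obtain ⟨ε, hε, hball⟩ := hev
  refine ⟨ε, hε, fun a' b' c' ha hb hc hcol => ?_⟩
  have : dist ((a', b', c') : Plane × Plane × Plane) (a, b, c) < ε := by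
    rw [Prod.dist_eq, Prod.dist_eq]
    exact max_lt (dist_comm a a' ▸ ha) (max_lt (dist_comm b b' ▸ hb) (dist_comm c c' ▸ hc))
  exact hball this (colDet_eq_zero_of_collinear hcol)

lemma dist_smul_combo {a b c d : Plane} {s t : ℝ} (hs : 0 ≤ s) (ht : 0 ≤ t) (hst : s + t = 1) :
    dist (s • a + t • b) (s • c + t • d) ≤ max (dist a c) (dist b d) := by
  have key : (s • a + t • b) - (s • c + t • d) = s • (a - c) + t • (b - d) := by module
  rw [dist_eq_norm, key]
  calc ‖s • (a - c) + t • (b - d)‖ ≤ ‖s • (a - c)‖ + ‖t • (b - d)‖ := norm_add_le _ _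
    _ = s * ‖a - c‖ + t * ‖b - d‖ := by
        rw [norm_smul, norm_smul, Real.norm_of_nonneg hs, Real.norm_of_nonneg ht]
    _ ≤ s * max (dist a c) (dist b d) + t * max (dist a c) (dist b d) := by
        gcongr
        · rw [← dist_eq_norm]; exact le_max_left _ _
        · rw [← dist_eq_norm]; exact le_max_right _ _
    _ = max (dist a c) (dist b d) := by rw [← add_mul, hst, one_mul]

lemma isCompact_polyBoundary {n : ℕ} [NeZero n] (P : Fin n → Plane) :
    IsCompact (polyBoundary P) := by
  refine isCompact_iUnion fun i => ?_
  rw [polyEdge, segment_eq_image]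
  exact isCompact_Icc.image (by fun_prop)

lemma boundary_close {n : ℕ} [NeZero n] {P Q : Fin n → Plane} {δ : ℝ}
    (h : ∀ i, dist (P i) (Q i) < δ) :
    ∀ z ∈ polyBoundary Q, ∃ w ∈ polyBoundary P, dist z w < δ := by
  intro z hz
  rw [polyBoundary, mem_iUnion] at hz
  obtain ⟨i, hi⟩ := hz
  rw [polyEdge, segment_eq_image₂] at hi
  obtain ⟨⟨s, t⟩, ⟨hs, ht, hst⟩, rfl⟩ := hi
  refine ⟨s • P i + t • P (i + 1), ?_, ?_⟩
  · rw [polyBoundary, mem_iUnion]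
    exact ⟨i, by rw [polyEdge, segment_eq_image₂]; exact ⟨(s, t), ⟨hs, ht, hst⟩, rfl⟩⟩
  · calc dist (s • Q i + t • Q (i+1)) (s • P i + t • P (i+1))
        ≤ max (dist (Q i) (P i)) (dist (Q (i+1)) (P (i+1))) := dist_smul_combo hs ht hst
      _ < δ := max_lt (dist_comm (P i) (Q i) ▸ h i) (dist_comm (P (i+1)) (Q (i+1)) ▸ h (i+1))

lemma exterior_stable {n : ℕ} [NeZero n] (P : Fin n → Plane) {x : Plane}
    (hx : x ∈ polyExterior P) :
    ∃ δ : ℝ, 0 < δ ∧ ∀ Q : Fin n → Plane, (∀ i, dist (P i) (Q i) < δ) →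
      ∀ x', dist x x' < δ → x' ∈ polyExterior Q := by
  obtain ⟨hxB, hxU⟩ := hx
  have hBc : IsCompact (polyBoundary P) := isCompact_polyBoundary P
  set C := connectedComponentIn (polyBoundary P)ᶜ x with hC
  have hxmem : x ∈ (polyBoundary P)ᶜ := hxB
  have hCopen : IsOpen C := hBc.isClosed.isOpen_compl.connectedComponentIn
  have hCconn : IsConnected C := isConnected_connectedComponentIn_iff.2 hxmem
  have hCpath : IsPathConnected C := hCopen.isConnected_iff_isPathConnected.1 hCconn
  obtain ⟨R0, hR0⟩ := isBounded_iff_forall_norm_le.1 hBc.isBounded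
  set R : ℝ := max R0 0 with hRdef
  have hRnn : (0:ℝ) ≤ R := le_max_right _ _
  have hRB : ∀ w ∈ polyBoundary P, ‖w‖ ≤ R := fun w hw => (hR0 w hw).trans (le_max_left _ _)
  have hxC : x ∈ C := mem_connectedComponentIn hxmem
  obtain ⟨y, hyC, hy⟩ : ∃ y ∈ C, R + 2 < ‖y‖ := by
    by_contra hcon
    push_neg at hcon
    exact hxU (isBounded_iff_forall_norm_le.2 ⟨R + 2, hcon⟩)
  have hyn : (0:ℝ) < ‖y‖ := lt_of_le_of_lt (by linarith) hy
  obtain ⟨γ, hγ⟩ := hCpath.joinedIn x hxC y hyC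
  set K : Set Plane := range γ with hK
  have hKc : IsCompact K := isCompact_range γ.continuous
  have hKC : K ⊆ C := by rintro _ ⟨t, rfl⟩; exact hγ t
  have hKB : Disjoint K (polyBoundary P) := by
    rw [Set.disjoint_left]
    exact fun z hz hzB => (connectedComponentIn_subset _ _ (hKC hz)) hzB
  obtain ⟨ε, hε, hdisj⟩ := hKB.exists_thickenings hKc hBc.isClosed
  have key : ∀ k ∈ K, ∀ b ∈ polyBoundary P, ε ≤ dist k b := by
    intro k hk b hb
    by_contra hlt
    push_neg at hlt
    have hb1 : b ∈ thickening ε K := mem_thickening_iff.2 ⟨k, hk, by rwa [dist_comm]⟩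
    have hb2 : b ∈ thickening ε (polyBoundary P) := self_subset_thickening hε _ hb
    exact Set.disjoint_left.1 hdisj hb1 hb2
  refine ⟨min (ε / 2) 1, lt_min (by linarith) one_pos, ?_⟩
  intro Q hQclose x' hxx'
  set δ := min (ε / 2) 1 with hδdef
  have hδε : δ ≤ ε / 2 := min_le_left _ _
  have hδ1 : δ ≤ 1 := min_le_right _ _
  have hBQ : ∀ z ∈ polyBoundary Q, ∃ w ∈ polyBoundary P, dist z w < δ := boundary_close hQclose
  have hxK : x ∈ K := ⟨0, γ.source⟩
  have hyK : y ∈ K := ⟨1, γ.target⟩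
  set S1 : Set Plane := segment ℝ x' x with hS1
  set S3 : Set Plane := (fun s : ℝ => s • y) '' Ici (1:ℝ) with hS3
  have hS1sub : S1 ⊆ (polyBoundary Q)ᶜ := by
    intro z hz hzB
    rw [hS1, segment_eq_image₂] at hz
    obtain ⟨⟨s, t⟩, ⟨hs, ht, hst⟩, rfl⟩ := hz
    have hzx : dist (s • x' + t • x) x ≤ dist x' x := by
      have hxx : x = s • x + t • x := by rw [← add_smul, hst, one_smul]
      calc dist (s • x' + t • x) x = dist (s • x' + t • x) (s • x + t • x) := by rw [← hxx]
        _ ≤ max (dist x' x) (dist x x) := dist_smul_combo hs ht hst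
        _ = dist x' x := by rw [dist_self]; exact max_eq_left dist_nonneg
    obtain ⟨w, hw, hzw⟩ := hBQ _ hzB
    have h1 : ε ≤ dist x w := key x hxK w hw
    have h2 : dist x w ≤ dist x (s • x' + t • x) + dist (s • x' + t • x) w := dist_triangle _ _ _
    have h3 : dist x (s • x' + t • x) ≤ dist x' x := by rw [dist_comm]; exact hzx
    have h4 : dist x' x < δ := by rw [dist_comm]; exact hxx'
    have : ε < ε := by
      calc ε ≤ dist x w := h1
        _ ≤ dist x (s • x' + t • x) + dist (s • x' + t • x) w := h2
        _ < δ + δ := add_lt_add (h3.trans_lt h4) hzw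
        _ ≤ ε / 2 + ε / 2 := by gcongr
        _ = ε := by ring
    exact absurd this (lt_irrefl ε)
  have hKsub : K ⊆ (polyBoundary Q)ᶜ := by
    intro z hz hzB
    obtain ⟨w, hw, hzw⟩ := hBQ _ hzB
    have : ε ≤ dist z w := key z hz w hw
    linarith [hzw.trans_le (hδε.trans (by linarith : ε / 2 ≤ ε))]
  have hS3sub : S3 ⊆ (polyBoundary Q)ᶜ := by
    rintro _ ⟨s, hs, rfl⟩ hzB
    have hs' : (1:ℝ) ≤ s := hs
    obtain ⟨w, hw, hzw⟩ := hBQ _ hzB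
    have hn1 : ‖y‖ ≤ ‖s • y‖ := by
      rw [norm_smul, Real.norm_of_nonneg (by linarith : (0:ℝ) ≤ s)]
      nlinarith [hs', hyn]
    have hn2 : ‖s • y‖ ≤ ‖w‖ + dist (s • y) w := by
      rw [dist_eq_norm]
      calc ‖s • y‖ = ‖w + (s • y - w)‖ := by congr 1; abel
        _ ≤ ‖w‖ + ‖s • y - w‖ := norm_add_le _ _
    have := hRB w hw
    have : R + 2 < R + 2 := by
      calc R + 2 < ‖y‖ := hy
        _ ≤ ‖w‖ + dist (s • y) w := hn1.trans hn2
        _ < R + 1 := by linarith [hzw.trans_le hδ1]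
        _ ≤ R + 2 := by linarith
    exact absurd this (lt_irrefl _)
  have hS1conn : IsPreconnected S1 := (convex_segment x' x).isPreconnected
  have hKconn : IsPreconnected K := isPreconnected_range γ.continuous
  have hS3conn : IsPreconnected S3 :=
    isPreconnected_Ici.image _ (by fun_prop : Continuous fun s : ℝ => s • y).continuousOn
  have hx1 : x ∈ S1 := right_mem_segment ℝ x' x
  have hyS3 : y ∈ S3 := ⟨1, Set.self_mem_Ici, one_smul ℝ y⟩
  have h12 : IsPreconnected (S1 ∪ K) := hS1conn.union x hx1 hxK hKconn
  have hU : IsPreconnected ((S1 ∪ K) ∪ S3) :=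
    h12.union y (Or.inr hyK) hyS3 hS3conn
  have hUsub : (S1 ∪ K) ∪ S3 ⊆ (polyBoundary Q)ᶜ :=
    union_subset (union_subset hS1sub hKsub) hS3sub
  have hx'U : x' ∈ (S1 ∪ K) ∪ S3 := Or.inl (Or.inl (left_mem_segment ℝ x' x))
  have hsub : (S1 ∪ K) ∪ S3 ⊆ connectedComponentIn (polyBoundary Q)ᶜ x' :=
    hU.subset_connectedComponentIn hx'U hUsub
  refine ⟨hUsub hx'U, fun hbdd => ?_⟩
  obtain ⟨M, hM⟩ := isBounded_iff_forall_norm_le.1 (hbdd.subset hsub)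
  set s0 : ℝ := max 1 ((M + 1) / ‖y‖) with hs0
  have hs01 : (1:ℝ) ≤ s0 := le_max_left _ _
  have hzS3 : s0 • y ∈ S3 := ⟨s0, mem_Ici.2 hs01, rfl⟩
  have hlarge : M + 1 ≤ ‖s0 • y‖ := by
    rw [norm_smul, Real.norm_of_nonneg (by linarith : (0:ℝ) ≤ s0)]
    calc M + 1 = ((M + 1) / ‖y‖) * ‖y‖ := by field_simp
      _ ≤ s0 * ‖y‖ := by gcongr; exact le_max_right _ _
  linarith [hM (s0 • y) (Or.inr hzS3)]

lemma case_collinear {n : ℕ} [NeZero n] (P : Fin n → Plane)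
    (q : Fin 3 → Fin n) (ma mb : Fin 3)
    (hallP : ∀ m, P (q m) ∈ segment ℝ (P (q ma)) (P (q mb)))
    (hnc : ¬ ∃ u v : Plane, (∀ m, P (q m) ∈ segment ℝ u v) ∧
      segment ℝ u v ∩ polyExterior P = ∅) :
    ∃ δ : ℝ, 0 < δ ∧ ∀ Q : Fin n → Plane, (∀ i, dist (P i) (Q i) < δ) →
      ∀ u v : Plane, (∀ m, Q (q m) ∈ segment ℝ u v) →
        segment ℝ u v ∩ polyExterior Q ≠ ∅ := by
  push_neg at hnc
  obtain ⟨x, hxseg, hxext⟩ := hnc _ _ hallP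
  obtain ⟨δ, hδ, hstab⟩ := exterior_stable P hxext
  refine ⟨δ, hδ, ?_⟩
  intro Q hclose u v hmem
  rw [segment_eq_image₂] at hxseg
  obtain ⟨⟨s, t⟩, ⟨hs, ht, hst⟩, hxeq⟩ := hxseg
  set x' := s • Q (q ma) + t • Q (q mb) with hx'def
  have hx' : dist x x' < δ := by
    rw [← hxeq]
    calc dist (s • P (q ma) + t • P (q mb)) (s • Q (q ma) + t • Q (q mb))
        ≤ max (dist (P (q ma)) (Q (q ma))) (dist (P (q mb)) (Q (q mb))) :=
          dist_smul_combo hs ht hst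
      _ < δ := max_lt (hclose _) (hclose _)
  have hx'mem : x' ∈ segment ℝ u v :=
    (convex_segment u v) (hmem ma) (hmem mb) hs ht hst
  have hx'ext : x' ∈ polyExterior Q := hstab Q hclose x' hx'
  exact fun hemp => (eq_empty_iff_forall_notMem.1 hemp x') ⟨hx'mem, hx'ext⟩

end SafeRadiusProof

/-- Every simple polygon has a safe radius. -/

theorem statement3 {n : ℕ} [NeZero n] (P : Fin n → Plane)
    (hP : IsSimplePolygon n P) :
    ∃ δ : ℝ, SafeRadius P δ := by
  have hnonempty : Nonempty (Fin n) := ⟨⟨0, Nat.pos_of_ne_zero (NeZero.ne n)⟩⟩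
  have H : ∀ q : Fin 3 → Fin n, ∃ δ : ℝ, 0 < δ ∧ ∀ Q : Fin n → Plane,
      IsSimplePolygon n Q → (∀ i, dist (P i) (Q i) < δ) →
        CriticalTuple Q q → CriticalTuple P q := by
    intro q
    have hinj : ∀ Q : Fin n → Plane, Function.Injective (fun m => Q (q m)) →
        Function.Injective (fun m => P (q m)) := by
      intro Q hQinj
      exact hP.2.1.comp (Function.Injective.of_comp (f := Q) hQinj)
    by_cases hcrit : ∃ u v : Plane, (∀ m, P (q m) ∈ segment ℝ u v) ∧
        segment ℝ u v ∩ polyExterior P = ∅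
    · exact ⟨1, one_pos, fun Q hQ _ hQcrit => ⟨hinj Q hQcrit.1, hcrit⟩⟩
    · by_cases hcol : Collinear ℝ ({P (q 0), P (q 1), P (q 2)} : Set Plane)
      · have hkey : ∃ ma mb : Fin 3, ∀ m, P (q m) ∈ segment ℝ (P (q ma)) (P (q mb)) := by
          rcases hcol.wbtw_or_wbtw_or_wbtw with hw | hw | hw
          · refine ⟨0, 2, fun m => ?_⟩
            fin_cases m
            · exact left_mem_segment ℝ _ _
            · exact hw.mem_segment
            · exact right_mem_segment ℝ _ _
          · refine ⟨1, 0, fun m => ?_⟩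
            fin_cases m
            · exact right_mem_segment ℝ _ _
            · exact left_mem_segment ℝ _ _
            · exact hw.mem_segment
          · refine ⟨2, 1, fun m => ?_⟩
            fin_cases m
            · exact hw.mem_segment
            · exact right_mem_segment ℝ _ _
            · exact left_mem_segment ℝ _ _
        obtain ⟨ma, mb, hallP⟩ := hkey
        obtain ⟨δ, hδ, hk⟩ := case_collinear P q ma mb hallP hcrit
        refine ⟨δ, hδ, fun Q hQ hclose hQcrit => ?_⟩
        obtain ⟨hQinj, u, v, hmem, hdisj⟩ := hQcrit
        exact absurd hdisj (hk Q hclose u v hmem)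
      · obtain ⟨δ, hδ, hstab⟩ := noncollinear_stable hcol
        refine ⟨δ, hδ, fun Q hQ hclose hQcrit => ?_⟩
        obtain ⟨hQinj, u, v, hmem, hdisj⟩ := hQcrit
        have hsubset : ({Q (q 0), Q (q 1), Q (q 2)} : Set Plane) ⊆ segment ℝ u v := by
          rintro z (rfl | rfl | rfl) <;> exact hmem _
        have hQcol : Collinear ℝ ({Q (q 0), Q (q 1), Q (q 2)} : Set Plane) :=
          (collinear_segment' u v).subset hsubset
        exact absurd hQcol (hstab _ _ _ (hclose _) (hclose _) (hclose _))
  choose f hf0 hf using H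
  have hne : (Finset.univ : Finset (Fin 3 → Fin n)).Nonempty := Finset.univ_nonempty
  refine ⟨Finset.univ.inf' hne f, ?_, ?_⟩
  · exact (Finset.lt_inf'_iff hne).2 fun q _ => hf0 q
  · intro Q hQ hclose q hcrit
    exact hf q Q hQ
      (fun i => lt_of_lt_of_le (hclose i) (Finset.inf'_le f (Finset.mem_univ q))) hcrit
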